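/- Let G be a group and H ≤ G a subgroup equipped with a topology making H a topological group. Assume that for every g ∈ G and every neighborhood U of the identity in H there exists a neighborhood V of the identity in H such that g v g^{-1} ∈ H for all v ∈ V and {g v g^{-1} | v ∈ V} ⊆ U (viewing U, V as subsets of G). Then there exists a unique topology on G making G a topological group such that H is an open subset of G and the subspace topology on H coincides with the given topology. -/

import Mathlib

open Filter Set Topology

/-- Let `H` be a subgroup of an abstract group `G`, equipped with a topology making it a
topological group, and suppose that conjugation by any `g ∈ G` is "continuous at 1" into `H`:
for each identity neighborhood `U` in `H` there is an identity neighborhood `V` with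
`g V g⁻¹ ⊆ U` (in particular `g V g⁻¹ ⊆ H`). Then there is a unique group topology on `G` for
which `H` is open and whose subspace topology on `H` is the given one. -/
theorem stmt6 {G : Type*} [Group G] (H : Subgroup G)
    [ts : TopologicalSpace H] [IsTopologicalGroup H]
    (hconj : ∀ g : G, ∀ U ∈ nhds (1 : H), ∃ V ∈ nhds (1 : H),
      ∀ v ∈ V, g * (v : G) * g⁻¹ ∈ H ∧ g * (v : G) * g⁻¹ ∈ (fun h : H => (h : G)) '' U) :
    ∃! t : TopologicalSpace G, @IsTopologicalGroup G t _ ∧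
      @IsOpen G t (H : Set G) ∧
      TopologicalSpace.induced (fun h : H => (h : G)) t = ts := by
  set incl : H → G := fun h : H => (h : G) with hincl
  have hinj : Function.Injective incl := Subtype.coe_injective
  -- the group filter basis on G
  let B : GroupFilterBasis G :=
    { sets := {s | ∃ U ∈ 𝓝 (1 : H), s = incl '' U}
      nonempty := ⟨incl '' Set.univ, Set.univ, univ_mem, rfl⟩
      inter_sets := by
        rintro _ _ ⟨U, hU, rfl⟩ ⟨V, hV, rfl⟩
        exact ⟨incl '' (U ∩ V), ⟨U ∩ V, inter_mem hU hV, rfl⟩,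
          (Set.image_inter_subset _ _ _)⟩
      one' := by
        rintro _ ⟨U, hU, rfl⟩
        exact ⟨1, mem_of_mem_nhds hU, rfl⟩
      mul' := by
        rintro _ ⟨U, hU, rfl⟩
        obtain ⟨V, hV, hVU⟩ := exists_nhds_one_split hU
        refine ⟨incl '' V, ⟨V, hV, rfl⟩, ?_⟩
        rintro _ ⟨_, ⟨a, ha, rfl⟩, _, ⟨b, hb, rfl⟩, rfl⟩
        exact ⟨a * b, hVU a ha b hb, rfl⟩
      inv' := by
        rintro _ ⟨U, hU, rfl⟩
        refine ⟨incl '' ((fun x : H => x⁻¹) ⁻¹' U), ⟨_,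
          (continuous_inv.tendsto (1 : H)).mono_right (by simp) hU, rfl⟩, ?_⟩
        rintro _ ⟨a, ha, rfl⟩
        exact ⟨a⁻¹, ha, rfl⟩
      conj' := by
        rintro x₀ _ ⟨U, hU, rfl⟩
        obtain ⟨V, hV, hVU⟩ := hconj x₀ U hU
        refine ⟨incl '' V, ⟨V, hV, rfl⟩, ?_⟩
        rintro _ ⟨a, ha, rfl⟩
        exact (hVU a ha).2 }
  -- its filter is the pushforward of `𝓝 1` from `H`
  have hfilter : B.toFilterBasis.filter = map incl (𝓝 (1 : H)) := by
    ext s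
    rw [FilterBasis.mem_filter_iff, mem_map]
    constructor
    · rintro ⟨_, ⟨U, hU, rfl⟩, hsub⟩
      exact mem_of_superset hU fun v hv => hsub ⟨v, hv, rfl⟩
    · intro hs
      exact ⟨incl '' (incl ⁻¹' s), ⟨_, hs, rfl⟩, Set.image_preimage_subset _ _⟩
  refine ⟨B.topology, ⟨B.isTopologicalGroup, ?_, ?_⟩, ?_⟩
  · -- H is open
    letI := B.topology
    rw [isOpen_iff_mem_nhds]
    intro x hx
    rw [B.nhds_eq, GroupFilterBasis.N, hfilter, mem_map, mem_map]
    refine mem_of_superset univ_mem fun v _ => ?_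
    exact H.mul_mem hx v.2
  · -- induced topology is ts
    refine TopologicalSpace.ext_nhds fun h => ?_
    rw [@nhds_induced, B.nhds_eq, GroupFilterBasis.N, hfilter, Filter.map_map]
    have : ((fun y : G => incl h * y) ∘ incl) = incl ∘ (fun y : H => h * y) := by
      funext y; rfl
    rw [this, ← Filter.map_map, map_mul_left_nhds_one, Filter.comap_map hinj]
  · -- uniqueness
    rintro t ⟨tg, hopen, hind⟩
    -- nhds of 1 in t is map incl (𝓝 1)
    have key : ∀ (t' : TopologicalSpace G), @IsOpen G t' (H : Set G) →
        TopologicalSpace.induced incl t' = ts →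
        @nhds G t' 1 = map incl (𝓝 (1 : H)) := by
      intro t' ho hi
      letI := t'
      have h1 : (1 : G) ∈ (H : Set G) := H.one_mem
      have key2 : map incl (@nhds H (TopologicalSpace.induced incl t') 1) = @nhds G t' 1 := by
        rw [@nhds_induced, Filter.map_comap]
        have hr : Set.range incl = (H : Set G) := Subtype.range_coe
        rw [hr]
        exact inf_eq_left.2 (le_principal_iff.2 (ho.mem_nhds h1))
      rw [hi] at key2
      exact key2.symm
    refine IsTopologicalGroup.ext tg B.isTopologicalGroup ?_
    rw [key t hopen hind, B.nhds_one_eq, hfilter]
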